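/- Let C be an [n,k,d]_q linear code and let H_all be the q^{n-k} × n matrix whose rows are all codewords of the dual code C⊥. Then H_all is an orthogonal array of strength d-1: for any set T of d-1 coordinates and any vector v ∈ F_q^{d-1}, exactly q^{n-k-(d-1)} rows of H_all agree with v on the coordinates T. -/

import Mathlib

variable {F : Type} [Field F] [Fintype F] [DecidableEq F]

/-- The dual code of a linear code `C`. -/
def dualCode {ι : Type} [Fintype ι] (C : Submodule F (ι → F)) : Submodule F (ι → F) where
  carrier := {x | ∀ c ∈ C, ∑ i, x i * c i = 0}
  add_mem' := by
    intro a b ha hb c hc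
    simp only [Set.mem_setOf_eq, Pi.add_apply] at *
    simp [add_mul, Finset.sum_add_distrib, ha c hc, hb c hc]
  zero_mem' := by
    intro c hc
    simp
  smul_mem' := by
    intro a x hx c hc
    simp only [Set.mem_setOf_eq, Pi.smul_apply, smul_eq_mul, mul_assoc,
      ← Finset.mul_sum, hx c hc, mul_zero]

/-- `d` is the minimum distance of the code `D`. -/
def IsMinDist {ι : Type} [Fintype ι] (D : Submodule F (ι → F)) (d : ℕ) : Prop :=
  (∀ c ∈ D, c ≠ 0 → d ≤ hammingNorm c) ∧ ∃ c ∈ D, c ≠ 0 ∧ hammingNorm c = d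

/-- `H(S)`: delete the rows of `H` with a nonzero entry in `S`, and the columns in `S`. -/
def subMat {m n : ℕ} (H : Matrix (Fin m) (Fin n) F) (S : Finset (Fin n)) :
    Matrix {i : Fin m // ∀ j ∈ S, H i j = 0} {j : Fin n // j ∉ S} F :=
  Matrix.of fun i j => H i.1 j.1

lemma mem_dualCode {ι : Type} [Fintype ι] {C : Submodule F (ι → F)} {x : ι → F} :
    x ∈ dualCode C ↔ ∀ c ∈ C, ∑ i, x i * c i = 0 := Iff.rfl

lemma dualCode_eq_comap {ι : Type} [Fintype ι] [DecidableEq ι] (W : Submodule F (ι → F)) :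
    dualCode W = W.dualAnnihilator.comap (LinearEquiv.piRing F F ι F).symm.toLinearMap := by
  ext x
  simp [mem_dualCode, Submodule.mem_dualAnnihilator, LinearEquiv.piRing_symm_apply,
    mul_comm]

lemma finrank_dualCode_add {ι : Type} [Fintype ι] [DecidableEq ι] (W : Submodule F (ι → F)) :
    Module.finrank F (dualCode W) + Module.finrank F W = Fintype.card ι := by
  rw [dualCode_eq_comap, Submodule.comap_equiv_eq_map_symm,
    LinearEquiv.finrank_map_eq, ← (Subspace.quotEquivAnnihilator W).finrank_eq,
    Submodule.finrank_quotient_add_finrank, Module.finrank_pi]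

lemma le_dualCode_dualCode {ι : Type} [Fintype ι] (W : Submodule F (ι → F)) :
    W ≤ dualCode (dualCode W) := by
  intro w hw x hx
  have := hx w hw
  rw [← this]
  exact Finset.sum_congr rfl fun i _ => mul_comm _ _

lemma dualCode_dualCode {ι : Type} [Fintype ι] [DecidableEq ι] (W : Submodule F (ι → F)) :
    dualCode (dualCode W) = W := by
  have h1 := finrank_dualCode_add W
  have h2 := finrank_dualCode_add (dualCode W)
  exact (Submodule.eq_of_le_of_finrank_eq (le_dualCode_dualCode W) (by omega)).symm

lemma exists_ne_zero_mem_dualCode {ι : Type} [Fintype ι] [DecidableEq ι]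
    {W : Submodule F (ι → F)} (hW : W ≠ ⊤) : ∃ a ∈ dualCode W, a ≠ 0 := by
  have h1 := finrank_dualCode_add W
  have h2 : Module.finrank F W < Fintype.card ι := by
    have := Submodule.finrank_lt (K := F) (V := ι → F) hW
    rwa [Module.finrank_pi] at this
  have h3 : dualCode W ≠ ⊥ := by
    intro h
    rw [h, finrank_bot] at h1
    omega
  exact (Submodule.ne_bot_iff _).mp h3

lemma restrict_surjective {n d : ℕ} (C : Submodule F (Fin n → F)) (hd : IsMinDist C d)
    (T : Finset (Fin n)) (hT : T.card = d - 1) :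
    Function.Surjective ((LinearMap.funLeft F F (fun j : {j : Fin n // j ∈ T} => j.1)).comp
      (dualCode C).subtype) := by
  set r := (LinearMap.funLeft F F (fun j : {j : Fin n // j ∈ T} => j.1)).comp
      (dualCode C).subtype with hr
  rw [← LinearMap.range_eq_top]
  by_contra hne
  obtain ⟨a, ha, ha0⟩ := exists_ne_zero_mem_dualCode hne
  set a' : Fin n → F := fun i => if h : i ∈ T then a ⟨i, h⟩ else 0 with ha'
  have ha'T : ∀ j : {j : Fin n // j ∈ T}, a' j.1 = a j := by
    intro j; simp only [ha', dif_pos j.2]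
  have hmem : a' ∈ dualCode (dualCode C) := by
    intro x hx
    have h1 : ∑ i, a' i * x i = ∑ j : {j : Fin n // j ∈ T}, a' j.1 * x j.1 := by
      rw [Finset.sum_coe_sort T (fun i => a' i * x i)]
      refine (Finset.sum_subset (Finset.subset_univ T) ?_).symm
      intro i _ hi
      simp [ha', dif_neg hi]
    have h2 : ∑ j : {j : Fin n // j ∈ T}, a j * (r ⟨x, hx⟩) j = 0 := ha _ ⟨⟨x, hx⟩, rfl⟩
    rw [h1]
    rw [← h2]
    refine Finset.sum_congr rfl fun j _ => ?_
    rw [ha'T j]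
    rfl
  rw [dualCode_dualCode] at hmem
  have hne0 : a' ≠ 0 := by
    intro h
    apply ha0
    funext j
    have := congrFun h j.1
    rwa [ha'T j] at this
  have hnorm : hammingNorm a' ≤ T.card := by
    apply Finset.card_le_card
    intro i hi
    simp only [Finset.mem_filter, Finset.mem_univ, true_and] at hi
    by_contra hiT
    exact hi (by simp [ha', dif_neg hiT])
  have hd1 : 1 ≤ d := by
    obtain ⟨c, _, hc0, hcd⟩ := hd.2
    have := hammingNorm_pos_iff.mpr hc0
    omega
  have := hd.1 a' hmem hne0
  omega

/-- The matrix of all dual codewords is an orthogonal array of strength `d-1`. -/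
theorem stmt_4 (n k d : ℕ)
    (C : Submodule F (Fin n → F)) (hk : Module.finrank F C = k) (hd : IsMinDist C d)
    (T : Finset (Fin n)) (hT : T.card = d - 1) (v : {j : Fin n // j ∈ T} → F) :
    Nat.card {x : Fin n → F // x ∈ dualCode C ∧ ∀ j : {j : Fin n // j ∈ T}, x j.1 = v j} =
      Fintype.card F ^ (n - k - (d - 1)) := by
  set r := (LinearMap.funLeft F F (fun j : {j : Fin n // j ∈ T} => j.1)).comp
      (dualCode C).subtype with hr
  have hsurj := restrict_surjective C hd T hT
  obtain ⟨x0, hx0⟩ := hsurj v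
  -- the fiber is in bijection with the kernel
  have hcard : Nat.card {x : Fin n → F // x ∈ dualCode C ∧
      ∀ j : {j : Fin n // j ∈ T}, x j.1 = v j} = Nat.card (LinearMap.ker r) := by
    refine Nat.card_congr ⟨fun x => ⟨⟨x.1, x.2.1⟩ - x0, ?_⟩,
      fun y => ⟨(x0 + y.1 : dualCode C).1, (x0 + y.1).2, fun j => ?_⟩, fun x => ?_, fun y => ?_⟩
    · rw [LinearMap.mem_ker, map_sub, hx0]
      funext j
      simp only [Pi.sub_apply, Pi.zero_apply]
      have : r ⟨x.1, x.2.1⟩ j = x.1 j.1 := rfl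
      rw [this, x.2.2 j, sub_self]
    · have h1 : (x0 + y.1 : dualCode C).1 j.1 = r (x0 + y.1) j := rfl
      have h2 : r y.1 = 0 := y.2
      rw [h1, map_add, hx0, h2]
      simp
    · ext i
      simp
    · ext i
      simp
  rw [hcard]
  -- cardinality of the kernel
  have : Fintype ↥(LinearMap.ker r) := Fintype.ofFinite _
  rw [Nat.card_eq_fintype_card, Module.card_eq_pow_finrank (K := F)]
  congr 1
  have hrange : LinearMap.range r = ⊤ := LinearMap.range_eq_top.mpr hsurj
  have hrn := LinearMap.finrank_range_add_finrank_ker r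
  rw [hrange, finrank_top, Module.finrank_pi] at hrn
  have hdual := finrank_dualCode_add C
  rw [hk, Fintype.card_fin] at hdual
  have hcardT : Fintype.card {j : Fin n // j ∈ T} = d - 1 := by
    rw [Fintype.card_coe, hT]
  rw [hcardT] at hrn
  clear * - hrn hdual
  omega
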